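/- Let (W₁^k,…,W_J^k, Z^k, Λ₁^k,…,Λ_J^k) be a sequence such that: Z^{k+1} exactly minimizes L_{β_k}(W₁^k,…,W_J^k, Z, Λ₁^k,…,Λ_J^k) over Z with ZᵀZ = I_ℓ; each W_j^{k+1} exactly minimizes the linearized subproblem ‖W_j‖₁ + β_k(⟨A_jᵀ(A_j W_j^k + B_j Z^{k+1} − Λ_j^k/β_k), W_j − W_j^k⟩ + ‖W_j − W_j^k‖_F²/(2δ)) over W_j, with δ > 0; and Λ_j^{k+1} = Λ_j^k − β_k(A_j W_j^{k+1} + B_j Z^{k+1}). Suppose for each j that β_k(W_j^{k+1} − W_j^k) → 0 and (Λ_j^{k+1} − Λ_j^k)/β_k → 0 as k → ∞. Then any accumulation point (W₁*,…,W_J*, Z*, Λ₁*,…,Λ_J*, −∑_j (B_j Z*)ᵀ Λ_j*) of the sequence (W₁^k,…,W_J^k, Z^k, Λ₁^k,…,Λ_J^k, −∑_j (B_j Z^k)ᵀ Λ_j^k) satisfies: A_jᵀ Λ_j* ∈ ∂‖W_j*‖₁ for every j, A_j W_j* + B_j Z* = 0 for every j, and (Z*)ᵀ Z* = I_ℓ.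 -/

import Mathlib

open Matrix Filter Topology

/-- The ℓ1 norm of a real matrix: sum of absolute values of all entries. -/
noncomputable def l1 {α β : Type*} [Fintype α] [Fintype β] (W : Matrix α β ℝ) : ℝ :=
  ∑ i, ∑ j, |W i j|

/-- The Frobenius (trace) inner product of two real matrices. -/
noncomputable def frobInner {α β : Type*} [Fintype α] [Fintype β] (M N : Matrix α β ℝ) : ℝ :=
  ∑ i, ∑ j, M i j * N i j

/-- The squared Frobenius norm of a real matrix. -/
noncomputable def frobSq {α β : Type*} [Fintype α] [Fintype β] (M : Matrix α β ℝ) : ℝ :=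
  ∑ i, ∑ j, (M i j) ^ 2

/-- The subdifferential of a (convex) function on real matrices at a point. -/
def subdiff {α β : Type*} [Fintype α] [Fintype β]
    (f : Matrix α β ℝ → ℝ) (x : Matrix α β ℝ) : Set (Matrix α β ℝ) :=
  {g | ∀ y, f x + frobInner g (y - x) ≤ f y}

/-- The augmented Lagrangian of the sparse GCCA problem:
`L_β(W, Z, Λ) = ∑_j ‖W_j‖₁ − ∑_j ⟨Λ_j, A_j W_j + B_j Z⟩ + (β/2) ∑_j ‖A_j W_j + B_j Z‖_F²`. -/
noncomputable def augL {J ℓ m : ℕ} {n r : Fin J → ℕ}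
    (A : ∀ j, Matrix (Fin (r j)) (Fin (n j)) ℝ)
    (B : ∀ j, Matrix (Fin (r j)) (Fin m) ℝ)
    (β : ℝ)
    (W : ∀ j, Matrix (Fin (n j)) (Fin ℓ) ℝ)
    (Z : Matrix (Fin m) (Fin ℓ) ℝ)
    (Λ : ∀ j, Matrix (Fin (r j)) (Fin ℓ) ℝ) : ℝ :=
  (∑ j, l1 (W j)) - (∑ j, frobInner (Λ j) (A j * W j + B j * Z))
    + β / 2 * ∑ j, frobSq (A j * W j + B j * Z)

section FrobLemmas

variable {α β : Type*} [Fintype α] [Fintype β]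

lemma frobInner_add_right (M N P : Matrix α β ℝ) :
    frobInner M (N + P) = frobInner M N + frobInner M P := by
  simp [frobInner, Matrix.add_apply, mul_add, Finset.sum_add_distrib]

lemma frobInner_smul_right (t : ℝ) (M N : Matrix α β ℝ) :
    frobInner M (t • N) = t * frobInner M N := by
  simp only [frobInner, Matrix.smul_apply, smul_eq_mul, Finset.mul_sum]
  exact Finset.sum_congr rfl fun i _ => Finset.sum_congr rfl fun j _ => by ring

lemma frobInner_neg_left (M N : Matrix α β ℝ) :
    frobInner (-M) N = -frobInner M N := by
  simp [frobInner, Matrix.neg_apply, Finset.sum_neg_distrib]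

lemma frobInner_sub_left (M N P : Matrix α β ℝ) :
    frobInner (M - N) P = frobInner M P - frobInner N P := by
  simp [frobInner, Matrix.sub_apply, sub_mul, Finset.sum_sub_distrib]

lemma frobInner_smul_left (t : ℝ) (M N : Matrix α β ℝ) :
    frobInner (t • M) N = t * frobInner M N := by
  simp only [frobInner, Matrix.smul_apply, smul_eq_mul, Finset.mul_sum]
  exact Finset.sum_congr rfl fun i _ => Finset.sum_congr rfl fun j _ => by ring

lemma frobSq_add (M N : Matrix α β ℝ) :
    frobSq (M + N) = frobSq M + 2 * frobInner M N + frobSq N := by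
  have h : ∀ (i : α) (j : β), (M i j + N i j) ^ 2
      = M i j ^ 2 + 2 * (M i j * N i j) + N i j ^ 2 := fun i j => by ring
  simp only [frobSq, frobInner, Matrix.add_apply, h, Finset.sum_add_distrib, Finset.mul_sum]

lemma frobSq_smul (t : ℝ) (N : Matrix α β ℝ) :
    frobSq (t • N) = t ^ 2 * frobSq N := by
  simp only [frobSq, Matrix.smul_apply, smul_eq_mul, mul_pow, Finset.mul_sum]

lemma frobSq_nonneg (M : Matrix α β ℝ) : 0 ≤ frobSq M :=
  Finset.sum_nonneg fun i _ => Finset.sum_nonneg fun j _ => sq_nonneg _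

lemma l1_segment (x y : Matrix α β ℝ) {t : ℝ} (ht0 : 0 ≤ t) (ht1 : t ≤ 1) :
    l1 (x + t • (y - x)) ≤ (1 - t) * l1 x + t * l1 y := by
  have h : ∀ (i : α) (j : β), |(x + t • (y - x)) i j| ≤ (1 - t) * |x i j| + t * |y i j| := by
    intro i j
    have e : (x + t • (y - x)) i j = (1 - t) * x i j + t * y i j := by
      simp [Matrix.add_apply, Matrix.smul_apply, Matrix.sub_apply, smul_eq_mul]; ring
    rw [e]
    refine (abs_add_le _ _).trans ?_
    rw [abs_mul, abs_mul, abs_of_nonneg (by linarith : (0:ℝ) ≤ 1 - t), abs_of_nonneg ht0]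
  calc l1 (x + t • (y - x)) = ∑ i, ∑ j, |(x + t • (y - x)) i j| := rfl
    _ ≤ ∑ i, ∑ j, ((1 - t) * |x i j| + t * |y i j|) :=
        Finset.sum_le_sum fun i _ => Finset.sum_le_sum fun j _ => h i j
    _ = (1 - t) * l1 x + t * l1 y := by
        simp only [l1, Finset.sum_add_distrib, Finset.mul_sum]

end FrobLemmas

section TendstoLemmas

variable {ι : Type*} {F : Filter ι}

lemma tendsto_matmul {a b c : Type*} [Fintype a] [Fintype b] [Fintype c]
    {f : ι → Matrix a b ℝ} {g : ι → Matrix b c ℝ} {M : Matrix a b ℝ} {N : Matrix b c ℝ}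
    (hf : Tendsto f F (𝓝 M)) (hg : Tendsto g F (𝓝 N)) :
    Tendsto (fun k => f k * g k) F (𝓝 (M * N)) := by
  have hc : Continuous fun p : Matrix a b ℝ × Matrix b c ℝ => p.1 * p.2 :=
    continuous_fst.matrix_mul continuous_snd
  exact (hc.tendsto (M, N)).comp (hf.prodMk_nhds hg)

lemma tendsto_mulLeft {a b c : Type*} [Fintype a] [Fintype b] [Fintype c]
    (M : Matrix a b ℝ) {g : ι → Matrix b c ℝ} {N : Matrix b c ℝ}
    (hg : Tendsto g F (𝓝 N)) :
    Tendsto (fun k => M * g k) F (𝓝 (M * N)) :=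
  tendsto_matmul tendsto_const_nhds hg

lemma tendsto_transpose {a b : Type*} [Fintype a] [Fintype b]
    {f : ι → Matrix a b ℝ} {M : Matrix a b ℝ} (hf : Tendsto f F (𝓝 M)) :
    Tendsto (fun k => (f k)ᵀ) F (𝓝 Mᵀ) :=
  ((continuous_id.matrix_transpose).tendsto M).comp hf

lemma tendsto_l1 {a b : Type*} [Fintype a] [Fintype b]
    {f : ι → Matrix a b ℝ} {M : Matrix a b ℝ} (hf : Tendsto f F (𝓝 M)) :
    Tendsto (fun k => l1 (f k)) F (𝓝 (l1 M)) := by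
  have hc : Continuous fun X : Matrix a b ℝ => l1 X :=
    continuous_finset_sum _ fun i _ => continuous_finset_sum _ fun j _ =>
      (continuous_id.matrix_elem i j).abs
  exact (hc.tendsto M).comp hf

lemma tendsto_entry {a b : Type*} [Fintype a] [Fintype b]
    {f : ι → Matrix a b ℝ} {M : Matrix a b ℝ} (hf : Tendsto f F (𝓝 M)) (i : a) (j : b) :
    Tendsto (fun k => f k i j) F (𝓝 (M i j)) :=
  ((continuous_id.matrix_elem i j).tendsto M).comp hf

lemma tendsto_frobInner {a b : Type*} [Fintype a] [Fintype b]
    {f g : ι → Matrix a b ℝ} {M N : Matrix a b ℝ}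
    (hf : Tendsto f F (𝓝 M)) (hg : Tendsto g F (𝓝 N)) :
    Tendsto (fun k => frobInner (f k) (g k)) F (𝓝 (frobInner M N)) := by
  simp only [frobInner]
  exact tendsto_finset_sum _ fun i _ => tendsto_finset_sum _ fun j _ =>
    (tendsto_entry hf i j).mul (tendsto_entry hg i j)

end TendstoLemmas

/-- An exact minimizer of `l1 + c⟨G, · - W0⟩ + c‖· - W0‖²/(2δ)` yields a subgradient of `l1`. -/
lemma subgrad_of_min {α β : Type*} [Fintype α] [Fintype β]
    {c δ : ℝ} (hc : 0 < c) (hδ : 0 < δ) (G W0 x : Matrix α β ℝ)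
    (h : ∀ Y, l1 x + c * (frobInner G (x - W0) + frobSq (x - W0) / (2 * δ))
        ≤ l1 Y + c * (frobInner G (Y - W0) + frobSq (Y - W0) / (2 * δ))) :
    -(c • G) - (c / δ) • (x - W0) ∈ subdiff l1 x := by
  intro Y
  have hS : 0 ≤ frobSq (Y - x) := frobSq_nonneg _
  have key : ∀ t : ℝ, 0 < t → t ≤ 1 →
      l1 x ≤ l1 Y + c * frobInner G (Y - x) + c / δ * frobInner (x - W0) (Y - x)
        + t * (c / (2 * δ) * frobSq (Y - x)) := by
    intro t ht0 ht1
    have h1 := h (x + t • (Y - x))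
    have e : x + t • (Y - x) - W0 = (x - W0) + t • (Y - x) := by abel
    rw [e, frobInner_add_right, frobInner_smul_right, frobSq_add, frobInner_smul_right,
      frobSq_smul] at h1
    have h2 := h1.trans (add_le_add_left (l1_segment x Y ht0.le ht1) _)
    refine le_of_mul_le_mul_left ?_ ht0
    have hδne : δ ≠ 0 := hδ.ne'
    have hd : t * (l1 Y + c * frobInner G (Y - x) + c / δ * frobInner (x - W0) (Y - x)
          + t * (c / (2 * δ) * frobSq (Y - x))) - t * l1 x
        = ((1 - t) * l1 x + t * l1 Y + c * (frobInner G (x - W0) + t * frobInner G (Y - x)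
            + (frobSq (x - W0) + 2 * (t * frobInner (x - W0) (Y - x))
              + t ^ 2 * frobSq (Y - x)) / (2 * δ)))
          - (l1 x + c * (frobInner G (x - W0) + frobSq (x - W0) / (2 * δ))) := by
      field_simp
      ring
    linarith [h2, hd]
  have hB : l1 x ≤ l1 Y + c * frobInner G (Y - x) + c / δ * frobInner (x - W0) (Y - x) := by
    set D := c / (2 * δ) * frobSq (Y - x) with hD
    have hDnn : 0 ≤ D := by positivity
    by_contra hcon
    push_neg at hcon
    set C := l1 Y + c * frobInner G (Y - x) + c / δ * frobInner (x - W0) (Y - x) - l1 x with hC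
    have hC0 : C < 0 := by simp only [hC]; linarith
    have htpos : 0 < min 1 ((-C) / (2 * (D + 1))) := by
      apply lt_min one_pos
      apply div_pos (by linarith) (by linarith)
    have hkey := key _ htpos (min_le_left _ _)
    have htle : min 1 ((-C) / (2 * (D + 1))) ≤ (-C) / (2 * (D + 1)) := min_le_right _ _
    have hmul : min 1 ((-C) / (2 * (D + 1))) * D ≤ (-C) / (2 * (D + 1)) * D :=
      mul_le_mul_of_nonneg_right htle hDnn
    have hlt : (-C) / (2 * (D + 1)) * D < -C := by
      rw [div_mul_eq_mul_div, div_lt_iff₀ (by linarith : (0:ℝ) < 2 * (D + 1))]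
      nlinarith
    simp only [hC] at hkey hmul hlt
    linarith
  have hfi : frobInner (-(c • G) - (c / δ) • (x - W0)) (Y - x)
      = -(c * frobInner G (Y - x)) - c / δ * frobInner (x - W0) (Y - x) := by
    rw [frobInner_sub_left, frobInner_neg_left, frobInner_smul_left, frobInner_smul_left]
  rw [hfi]
  linarith

/-- Theorem 2 of the paper. The iterates follow the inexact
(linearized) distributed ADMM of Algorithm 1: `Z^{k+1}` exactly minimizes the
augmented Lagrangian over the Stiefel manifold, `W_j^{k+1}` exactly minimizes the
linearized subproblem, and the multipliers are updated as usual. If for each `j`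
`β_k (W_j^{k+1} − W_j^k) → 0` and `(Λ_j^{k+1} − Λ_j^k)/β_k → 0`, then any accumulation
point of the (extended) sequence satisfies the KKT conditions. -/
theorem sparse_gcca_inexact_admm_convergence (J ℓ m : ℕ) (n r : Fin J → ℕ)
    (A : ∀ j, Matrix (Fin (r j)) (Fin (n j)) ℝ)
    (B : ∀ j, Matrix (Fin (r j)) (Fin m) ℝ)
    (W : ℕ → ∀ j, Matrix (Fin (n j)) (Fin ℓ) ℝ)
    (Z : ℕ → Matrix (Fin m) (Fin ℓ) ℝ)
    (Λ : ℕ → ∀ j, Matrix (Fin (r j)) (Fin ℓ) ℝ)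
    (β : ℕ → ℝ) (hβpos : ∀ k, 0 < β k) (hβmono : Monotone β)
    (δ : ℝ) (hδ : 0 < δ)
    -- `Z^{k+1}` exactly minimizes `L_{β_k}(W^k, ·, Λ^k)` over the Stiefel manifold:
    (hZfeas : ∀ k, (Z (k + 1))ᵀ * Z (k + 1) = 1)
    (hZmin : ∀ k (Z' : Matrix (Fin m) (Fin ℓ) ℝ), Z'ᵀ * Z' = 1 →
      augL A B (β k) (W k) (Z (k + 1)) (Λ k) ≤ augL A B (β k) (W k) Z' (Λ k))
    -- each `W_j^{k+1}` exactly minimizes the linearized subproblem: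
    (hWmin : ∀ k j (W' : Matrix (Fin (n j)) (Fin ℓ) ℝ),
      l1 (W (k + 1) j)
          + β k * (frobInner ((A j)ᵀ * (A j * W k j + B j * Z (k + 1) - (β k)⁻¹ • Λ k j))
                (W (k + 1) j - W k j)
              + frobSq (W (k + 1) j - W k j) / (2 * δ))
        ≤ l1 W'
          + β k * (frobInner ((A j)ᵀ * (A j * W k j + B j * Z (k + 1) - (β k)⁻¹ • Λ k j))
                (W' - W k j)
              + frobSq (W' - W k j) / (2 * δ)))
    -- multiplier update:
    (hΛ : ∀ k j, Λ (k + 1) j = Λ k j - β k • (A j * W (k + 1) j + B j * Z (k + 1)))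
    -- the assumed asymptotic conditions:
    (hWasym : ∀ j, Tendsto (fun k => β k • (W (k + 1) j - W k j)) atTop (𝓝 0))
    (hΛasym : ∀ j, Tendsto (fun k => (β k)⁻¹ • (Λ (k + 1) j - Λ k j)) atTop (𝓝 0)) :
    -- every accumulation point satisfies the KKT conditions:
    ∀ φ : ℕ → ℕ, StrictMono φ →
      ∀ (Wstar : ∀ j, Matrix (Fin (n j)) (Fin ℓ) ℝ) (Zstar : Matrix (Fin m) (Fin ℓ) ℝ)
        (Λstar : ∀ j, Matrix (Fin (r j)) (Fin ℓ) ℝ),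
        (∀ j, Tendsto (fun i => W (φ i) j) atTop (𝓝 (Wstar j))) →
        Tendsto (fun i => Z (φ i)) atTop (𝓝 Zstar) →
        (∀ j, Tendsto (fun i => Λ (φ i) j) atTop (𝓝 (Λstar j))) →
        (∀ j, (A j)ᵀ * Λstar j ∈ subdiff l1 (Wstar j)) ∧
        (∀ j, A j * Wstar j + B j * Zstar = 0) ∧
        Zstarᵀ * Zstar = 1 := by
  intro φ hφ Wstar Zstar Λstar hWlim hZlim hΛlim
  set ψ : ℕ → ℕ := fun i => φ (i + 1) - 1 with hψdef
  have hψ1 : ∀ i : ℕ, ψ i + 1 = φ (i + 1) := by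
    intro i
    have : 0 < φ (i + 1) := lt_of_lt_of_le (Nat.succ_pos i) hφ.le_apply
    simp only [hψdef]
    omega
  have hψtop : Tendsto ψ atTop atTop := by
    refine tendsto_atTop_mono (f := fun i => i) (fun i => ?_) tendsto_id
    have : i + 1 ≤ φ (i + 1) := hφ.le_apply
    simp only [hψdef]
    omega
  have hW1 : ∀ j, Tendsto (fun i => W (ψ i + 1) j) atTop (𝓝 (Wstar j)) := by
    intro j
    simp only [hψ1]
    exact (hWlim j).comp (tendsto_add_atTop_nat 1)
  have hΛ1 : ∀ j, Tendsto (fun i => Λ (ψ i + 1) j) atTop (𝓝 (Λstar j)) := by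
    intro j
    simp only [hψ1]
    exact (hΛlim j).comp (tendsto_add_atTop_nat 1)
  have hZ1 : Tendsto (fun i => Z (ψ i + 1)) atTop (𝓝 Zstar) := by
    simp only [hψ1]
    exact hZlim.comp (tendsto_add_atTop_nat 1)
  have he : ∀ j, Tendsto (fun i => β (ψ i) • (W (ψ i + 1) j - W (ψ i) j)) atTop (𝓝 0) :=
    fun j => (hWasym j).comp hψtop
  refine ⟨fun j => ?_, fun j => ?_, ?_⟩
  · -- subgradient condition
    have hsub : ∀ i, ((A j)ᵀ * Λ (ψ i + 1) j
        + (A j)ᵀ * (A j * (β (ψ i) • (W (ψ i + 1) j - W (ψ i) j)))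
        - δ⁻¹ • (β (ψ i) • (W (ψ i + 1) j - W (ψ i) j))) ∈ subdiff l1 (W (ψ i + 1) j) := by
      intro i
      set k := ψ i with hk
      have hβne : β k ≠ 0 := (hβpos k).ne'
      have h1 : β k • (A j * W (k + 1) j + B j * Z (k + 1)) = Λ k j - Λ (k + 1) j := by
        rw [hΛ k j]; abel
      have h2 : β k • (A j * W k j + B j * Z (k + 1) - (β k)⁻¹ • Λ k j)
          = -(Λ (k + 1) j) - A j * (β k • (W (k + 1) j - W k j)) := by
        have hx : A j * W k j + B j * Z (k + 1) - (β k)⁻¹ • Λ k j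
            = (A j * W (k + 1) j + B j * Z (k + 1)) - A j * (W (k + 1) j - W k j)
              - (β k)⁻¹ • Λ k j := by
          rw [Matrix.mul_sub]; abel
        rw [hx, smul_sub, smul_sub, h1, ← Matrix.mul_smul, smul_smul,
          mul_inv_cancel₀ hβne, one_smul]
        abel
      have hmem := subgrad_of_min (hβpos k) hδ
        ((A j)ᵀ * (A j * W k j + B j * Z (k + 1) - (β k)⁻¹ • Λ k j))
        (W k j) (W (k + 1) j) (fun Y => hWmin k j Y)
      have hgeq : -(β k • ((A j)ᵀ * (A j * W k j + B j * Z (k + 1) - (β k)⁻¹ • Λ k j)))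
            - (β k / δ) • (W (k + 1) j - W k j)
          = (A j)ᵀ * Λ (k + 1) j + (A j)ᵀ * (A j * (β k • (W (k + 1) j - W k j)))
            - δ⁻¹ • (β k • (W (k + 1) j - W k j)) := by
        rw [← Matrix.mul_smul, h2, Matrix.mul_sub, Matrix.mul_neg, smul_smul,
          ← div_eq_inv_mul]
        abel
      rwa [hgeq] at hmem
    have hG : Tendsto (fun i => (A j)ᵀ * Λ (ψ i + 1) j
        + (A j)ᵀ * (A j * (β (ψ i) • (W (ψ i + 1) j - W (ψ i) j)))
        - δ⁻¹ • (β (ψ i) • (W (ψ i + 1) j - W (ψ i) j))) atTop (𝓝 ((A j)ᵀ * Λstar j)) := by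
      have := ((tendsto_mulLeft ((A j)ᵀ) (hΛ1 j)).add
        (tendsto_mulLeft ((A j)ᵀ) (tendsto_mulLeft (A j) (he j)))).sub
        ((he j).const_smul δ⁻¹)
      simpa using this
    intro Y
    have hlim : Tendsto (fun i => l1 (W (ψ i + 1) j)
        + frobInner ((A j)ᵀ * Λ (ψ i + 1) j
          + (A j)ᵀ * (A j * (β (ψ i) • (W (ψ i + 1) j - W (ψ i) j)))
          - δ⁻¹ • (β (ψ i) • (W (ψ i + 1) j - W (ψ i) j))) (Y - W (ψ i + 1) j)) atTop
        (𝓝 (l1 (Wstar j) + frobInner ((A j)ᵀ * Λstar j) (Y - Wstar j))) :=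
      (tendsto_l1 (hW1 j)).add (tendsto_frobInner hG (tendsto_const_nhds.sub (hW1 j)))
    exact le_of_tendsto hlim (Eventually.of_forall fun i => hsub i Y)
  · -- feasibility
    have hVzero : Tendsto (fun k => A j * W (k + 1) j + B j * Z (k + 1)) atTop (𝓝 0) := by
      have h := hΛasym j
      have heq : (fun k => (β k)⁻¹ • (Λ (k + 1) j - Λ k j))
          = fun k => -(A j * W (k + 1) j + B j * Z (k + 1)) := by
        funext k
        rw [hΛ k j, sub_sub_cancel_left, smul_neg, smul_smul,
          inv_mul_cancel₀ (hβpos k).ne', one_smul]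
      rw [heq] at h
      simpa using h.neg
    have hVlim : Tendsto (fun i => A j * W (ψ i + 1) j + B j * Z (ψ i + 1)) atTop
        (𝓝 (A j * Wstar j + B j * Zstar)) :=
      (tendsto_mulLeft (A j) (hW1 j)).add (tendsto_mulLeft (B j) hZ1)
    exact tendsto_nhds_unique hVlim (hVzero.comp hψtop)
  · -- orthogonality
    have hconst : Tendsto (fun i => (Z (ψ i + 1))ᵀ * Z (ψ i + 1)) atTop (𝓝 1) := by
      simp only [hZfeas]
      exact tendsto_const_nhds
    exact tendsto_nhds_unique (tendsto_matmul (tendsto_transpose hZ1) hZ1) hconst
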